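/- Let {ξ_i}_{i≥0} be i.i.d. standard normal random variables, β > 0, and define the last exit time τ(ξ) = max{i ≥ 0 : ξ_i > βi}. With u_β(y) = (a(β) + y/a(β)) β^{-1} and a(β) = √(2(ln β^{-1} - ln(2 ln β^{-1}) + ln((2π)^{-1/2}))), one has lim_{β→0} P(τ(ξ) ≤ u_β(y)) = exp(-e^{-y}) for every y ∈ ℝ. -/

import Mathlib

open Filter Real MeasureTheory ProbabilityTheory
open scoped Topology

noncomputable def aNorm (β : ℝ) : ℝ :=
  Real.sqrt (2 * (Real.log β⁻¹ - Real.log (2 * Real.log β⁻¹) +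
    Real.log ((2 * π) ^ (-(1 : ℝ) / 2))))

noncomputable def uNorm (β y : ℝ) : ℝ := (aNorm β + y / aNorm β) / β

notation "gc" => (Real.sqrt (2 * π))⁻¹

noncomputable def gpdf : ℝ → ℝ := gaussianPDFReal 0 1

noncomputable def gQ (x : ℝ) : ℝ := ∫ t in Set.Ioi x, gpdf t

noncomputable def gT (x : ℝ) : ℝ := gpdf x - x * gQ x

lemma gpdf_eq (x : ℝ) : gpdf x = (Real.sqrt (2 * π))⁻¹ * Real.exp (-(x ^ 2) / 2) := by
  simp [gpdf, gaussianPDFReal]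

lemma gpdf_pos (x : ℝ) : 0 < gpdf x := gaussianPDFReal_pos 0 1 x one_ne_zero

lemma gpdf_nonneg (x : ℝ) : 0 ≤ gpdf x := (gpdf_pos x).le

lemma gpdf_continuous : Continuous gpdf := by
  rw [show gpdf = fun x => (Real.sqrt (2 * π))⁻¹ * Real.exp (-(x ^ 2) / 2) from funext gpdf_eq]
  fun_prop

lemma gpdf_integrable : Integrable gpdf := integrable_gaussianPDFReal 0 1

lemma gpdf_total : ∫ x, gpdf x = 1 := integral_gaussianPDFReal_eq_one 0 one_ne_zero

lemma gpdf_hasDeriv (x : ℝ) : HasDerivAt gpdf (-x * gpdf x) x := by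
  have h1 : HasDerivAt (fun t : ℝ => -(t ^ 2) / 2) (-x) x := by
    have := ((hasDerivAt_pow 2 x).neg).div_const 2
    simpa using this.congr_deriv (by ring)
  have h2 := (h1.exp).const_mul (Real.sqrt (2 * π))⁻¹
  have : HasDerivAt gpdf ((Real.sqrt (2 * π))⁻¹ * (Real.exp (-(x ^ 2) / 2) * (-x))) x := by
    refine HasDerivAt.congr_of_eventuallyEq ?_ (Eventually.of_forall gpdf_eq)
    exact h2
  rw [gpdf_eq x]; convert this using 1; ring

lemma gpdf_anti {x y : ℝ} (hx : 0 ≤ x) (hxy : x ≤ y) : gpdf y ≤ gpdf x := by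
  rw [gpdf_eq, gpdf_eq]
  have h : -(y ^ 2) / 2 ≤ -(x ^ 2) / 2 := by nlinarith
  have := Real.exp_le_exp.2 h
  have hc : (0:ℝ) < (Real.sqrt (2 * π))⁻¹ := by
    rw [inv_pos]; exact Real.sqrt_pos.2 (by positivity)
  nlinarith

lemma gpdf_tendsto : Tendsto gpdf atTop (𝓝 0) := by
  rw [show gpdf = fun x => (Real.sqrt (2 * π))⁻¹ * Real.exp (-(x ^ 2) / 2) from funext gpdf_eq]
  rw [show (0:ℝ) = (Real.sqrt (2 * π))⁻¹ * 0 by ring]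
  refine Tendsto.const_mul _ ?_
  refine Real.tendsto_exp_atBot.comp ?_
  refine Tendsto.atBot_div_const (by norm_num) ?_
  refine tendsto_neg_atBot_iff.2 ?_
  exact tendsto_pow_atTop (by norm_num)

lemma gQ_nonneg (x : ℝ) : 0 ≤ gQ x :=
  setIntegral_nonneg measurableSet_Ioi fun t _ => gpdf_nonneg t

lemma gQ_le_one (x : ℝ) : gQ x ≤ 1 := by
  rw [← gpdf_total]
  exact setIntegral_le_integral gpdf_integrable (Eventually.of_forall gpdf_nonneg)

lemma gQ_anti : Antitone gQ := by
  intro x y hxy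
  refine setIntegral_mono_set gpdf_integrable.integrableOn
    (Eventually.of_forall fun t => gpdf_nonneg t) ?_
  exact Eventually.of_forall (Set.Ioi_subset_Ioi hxy)

lemma gQ_eq_one_sub (x : ℝ) : gQ x = 1 - ∫ t in Set.Iic x, gpdf t := by
  have h : (∫ t in Set.Iic x, gpdf t) + gQ x = 1 := by
    rw [gQ, ← gpdf_total]
    rw [← setIntegral_union (Set.Iic_disjoint_Ioi le_rfl) measurableSet_Ioi
      gpdf_integrable.integrableOn gpdf_integrable.integrableOn, Set.Iic_union_Ioi,
      setIntegral_univ]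
  linarith

lemma gQ_hasDeriv (x : ℝ) : HasDerivAt gQ (-(gpdf x)) x := by
  have h0 : ∀ z : ℝ, gQ z = 1 - ((∫ t in Set.Iic (0:ℝ), gpdf t) + ∫ t in (0:ℝ)..z, gpdf t) := by
    intro z
    rw [gQ_eq_one_sub]
    congr 1
    rw [← intervalIntegral.integral_Iic_sub_Iic gpdf_integrable.integrableOn
      gpdf_integrable.integrableOn]
    ring
  have h1 : HasDerivAt (fun z => ∫ t in (0:ℝ)..z, gpdf t) (gpdf x) x := by
    refine intervalIntegral.integral_hasDerivAt_right
      gpdf_integrable.intervalIntegrable ?_ gpdf_continuous.continuousAt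
    exact gpdf_continuous.stronglyMeasurable.stronglyMeasurableAtFilter
  have h2 : HasDerivAt (fun z => 1 - ((∫ t in Set.Iic (0:ℝ), gpdf t) + ∫ t in (0:ℝ)..z, gpdf t))
      (-(gpdf x)) x := by
    simpa using ((h1.const_add _).const_sub 1)
  exact h2.congr_of_eventuallyEq (Eventually.of_forall h0)

lemma gQ_tendsto : Tendsto gQ atTop (𝓝 0) := by
  have hnat : Tendsto (fun n : ℕ => gQ n) atTop (𝓝 0) := by
    have h := Antitone.tendsto_setIntegral (f := gpdf) (μ := volume)
      (s := fun n : ℕ => Set.Ioi (n : ℝ)) (fun i => measurableSet_Ioi)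
      (fun i j hij => Set.Ioi_subset_Ioi (by exact_mod_cast hij))
      gpdf_integrable.integrableOn
    have hempty : (⋂ n : ℕ, Set.Ioi ((n : ℝ))) = ∅ := by
      ext t
      simp only [Set.mem_iInter, Set.mem_Ioi, Set.mem_empty_iff_false, iff_false, not_forall,
        not_lt]
      obtain ⟨n, hn⟩ := exists_nat_gt t
      exact ⟨n, hn.le⟩
    rw [hempty] at h
    simpa [gQ] using h
  have hfloor : Tendsto (fun x : ℝ => gQ (⌊x⌋₊ : ℝ)) atTop (𝓝 0) :=
    hnat.comp tendsto_nat_floor_atTop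
  refine tendsto_of_tendsto_of_tendsto_of_le_of_le' tendsto_const_nhds hfloor
    (Eventually.of_forall fun x => gQ_nonneg x) ?_
  filter_upwards [eventually_ge_atTop (0:ℝ)] with x hx
  exact gQ_anti (Nat.floor_le hx)

lemma gpdf_def : gpdf = gaussianPDFReal 0 1 := rfl

lemma nonneg_of_deriv_nonpos_tendsto {g g' : ℝ → ℝ} {x : ℝ}
    (hd : ∀ t ∈ Set.Ici x, HasDerivAt g (g' t) t)
    (h0 : ∀ t ∈ Set.Ici x, g' t ≤ 0)
    (hlim : Tendsto g atTop (𝓝 0)) : 0 ≤ g x := by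
  have hanti : AntitoneOn g (Set.Ici x) := by
    refine antitoneOn_of_deriv_nonpos (convex_Ici x) ?_ ?_ ?_
    · intro t ht; exact (hd t ht).continuousAt.continuousWithinAt
    · intro t ht
      rw [interior_Ici] at ht
      exact (hd t (Set.mem_Ici.2 (Set.mem_Ioi.1 ht).le)).differentiableAt.differentiableWithinAt
    · intro t ht
      rw [interior_Ici] at ht
      rw [(hd t (Set.mem_Ici.2 (Set.mem_Ioi.1 ht).le)).deriv]
      exact h0 t (Set.mem_Ici.2 (Set.mem_Ioi.1 ht).le)
  refine le_of_tendsto hlim ?_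
  filter_upwards [eventually_ge_atTop x] with t ht
  exact hanti (Set.self_mem_Ici) ht ht

lemma tendsto_one_div_pow_atTop (n : ℕ) (hn : n ≠ 0) :
    Tendsto (fun t : ℝ => 1 / t ^ n) atTop (𝓝 0) := by
  simp only [one_div]
  exact tendsto_inv_atTop_zero.comp (tendsto_pow_atTop hn)

lemma mill_upper {x : ℝ} (hx : 1 ≤ x) : gQ x ≤ gpdf x / x := by
  have key : 0 ≤ (fun t : ℝ => gpdf t / t - gQ t) x := by
    refine nonneg_of_deriv_nonpos_tendsto (g := fun t : ℝ => gpdf t / t - gQ t) (x := x)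
      (g' := fun t => ((-t * gpdf t) * t - gpdf t * 1) / t ^ 2 - -(gpdf t)) ?_ ?_ ?_
    · intro t (ht : x ≤ t)
      have htne : t ≠ 0 := by have : (1:ℝ) ≤ t := le_trans hx ht; linarith
      exact ((gpdf_hasDeriv t).div (hasDerivAt_id t) htne).sub (gQ_hasDeriv t)
    · intro t (ht : x ≤ t)
      have ht1 : (1:ℝ) ≤ t := le_trans hx ht
      have htne : t ≠ 0 := by linarith
      show ((-t * gpdf t) * t - gpdf t * 1) / t ^ 2 - -(gpdf t) ≤ 0
      have h : ((-t * gpdf t) * t - gpdf t * 1) / t ^ 2 - -(gpdf t) = -(gpdf t / t ^ 2) := by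
        field_simp; ring
      rw [h, neg_nonpos]
      have := gpdf_nonneg t
      positivity
    · have h1 : Tendsto (fun t : ℝ => gpdf t / t) atTop (𝓝 0) := by
        have := gpdf_tendsto.mul tendsto_inv_atTop_zero
        simpa [div_eq_mul_inv] using this
      simpa using h1.sub gQ_tendsto
  simpa using le_of_sub_nonneg (by simpa using key)

lemma mill_lower {x : ℝ} (hx : 1 ≤ x) : gpdf x * (1 / x - 1 / x ^ 3) ≤ gQ x := by
  have key : 0 ≤ (fun t : ℝ => gQ t - gpdf t * (1 / t - 1 / t ^ 3)) x := by
    refine nonneg_of_deriv_nonpos_tendsto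
      (g := fun t : ℝ => gQ t - gpdf t * (1 / t - 1 / t ^ 3)) (x := x)
      (g' := fun t => -(gpdf t) -
        ((-t * gpdf t) * (1 / t - 1 / t ^ 3) +
          gpdf t * ((0 * t - 1 * 1) / t ^ 2 - (0 * t ^ 3 - 1 * ((3:ℕ) * t ^ 2)) / (t ^ 3) ^ 2)))
      ?_ ?_ ?_
    · intro t (ht : x ≤ t)
      have ht1 : (1:ℝ) ≤ t := le_trans hx ht
      have htne : t ≠ 0 := by linarith
      have htne3 : t ^ 3 ≠ 0 := pow_ne_zero _ htne
      have hinv : HasDerivAt (fun s : ℝ => 1 / s - 1 / s ^ 3)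
          ((0 * t - 1 * 1) / t ^ 2 - (0 * t ^ 3 - 1 * ((3:ℕ) * t ^ 2)) / (t ^ 3) ^ 2) t := by
        have h1 := (hasDerivAt_const t (1:ℝ)).div (hasDerivAt_id t) htne
        have h2 := (hasDerivAt_const t (1:ℝ)).div (hasDerivAt_pow 3 t) htne3
        exact h1.sub h2
      exact (gQ_hasDeriv t).sub ((gpdf_hasDeriv t).mul hinv)
    · intro t (ht : x ≤ t)
      have ht1 : (1:ℝ) ≤ t := le_trans hx ht
      have htne : t ≠ 0 := by linarith
      show -(gpdf t) -
          ((-t * gpdf t) * (1 / t - 1 / t ^ 3) +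
            gpdf t * ((0 * t - 1 * 1) / t ^ 2 - (0 * t ^ 3 - 1 * ((3:ℕ) * t ^ 2)) / (t ^ 3) ^ 2))
          ≤ 0
      have h : -(gpdf t) -
          ((-t * gpdf t) * (1 / t - 1 / t ^ 3) +
            gpdf t * ((0 * t - 1 * 1) / t ^ 2 - (0 * t ^ 3 - 1 * ((3:ℕ) * t ^ 2)) / (t ^ 3) ^ 2))
          = -(3 * gpdf t / t ^ 4) := by
        push_cast
        field_simp
        ring
      rw [h, neg_nonpos]
      have := gpdf_nonneg t
      positivity
    · have ha : Tendsto (fun t : ℝ => 1 / t - 1 / t ^ 3) atTop (𝓝 0) := by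
        have h2 := tendsto_one_div_pow_atTop 1 one_ne_zero
        have h3 := tendsto_one_div_pow_atTop 3 three_ne_zero
        simpa using h2.sub h3
      have h1 : Tendsto (fun t : ℝ => gpdf t * (1 / t - 1 / t ^ 3)) atTop (𝓝 0) := by
        simpa using gpdf_tendsto.mul ha
      simpa using gQ_tendsto.sub h1
  simpa using le_of_sub_nonneg (by simpa using key)

lemma mill_upper' {x : ℝ} (hx : 1 ≤ x) :
    gQ x ≤ gpdf x * (1 / x - 1 / x ^ 3 + 3 / x ^ 5) := by
  have key : 0 ≤ (fun t : ℝ => gpdf t * (1 / t - 1 / t ^ 3 + 3 / t ^ 5) - gQ t) x := by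
    refine nonneg_of_deriv_nonpos_tendsto
      (g := fun t : ℝ => gpdf t * (1 / t - 1 / t ^ 3 + 3 / t ^ 5) - gQ t) (x := x)
      (g' := fun t => ((-t * gpdf t) * (1 / t - 1 / t ^ 3 + 3 / t ^ 5) +
          gpdf t * ((0 * t - 1 * 1) / t ^ 2 - (0 * t ^ 3 - 1 * ((3:ℕ) * t ^ 2)) / (t ^ 3) ^ 2
            + (0 * t ^ 5 - 3 * ((5:ℕ) * t ^ 4)) / (t ^ 5) ^ 2)) - -(gpdf t)) ?_ ?_ ?_
    · intro t (ht : x ≤ t)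
      have ht1 : (1:ℝ) ≤ t := le_trans hx ht
      have htne : t ≠ 0 := by linarith
      have hinv : HasDerivAt (fun s : ℝ => 1 / s - 1 / s ^ 3 + 3 / s ^ 5)
          ((0 * t - 1 * 1) / t ^ 2 - (0 * t ^ 3 - 1 * ((3:ℕ) * t ^ 2)) / (t ^ 3) ^ 2
            + (0 * t ^ 5 - 3 * ((5:ℕ) * t ^ 4)) / (t ^ 5) ^ 2) t := by
        have h1 := (hasDerivAt_const t (1:ℝ)).div (hasDerivAt_id t) htne
        have h2 := (hasDerivAt_const t (1:ℝ)).div (hasDerivAt_pow 3 t) (pow_ne_zero _ htne)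
        have h3 := (hasDerivAt_const t (3:ℝ)).div (hasDerivAt_pow 5 t) (pow_ne_zero _ htne)
        exact (h1.sub h2).add h3
      exact ((gpdf_hasDeriv t).mul hinv).sub (gQ_hasDeriv t)
    · intro t (ht : x ≤ t)
      have ht1 : (1:ℝ) ≤ t := le_trans hx ht
      have htne : t ≠ 0 := by linarith
      show ((-t * gpdf t) * (1 / t - 1 / t ^ 3 + 3 / t ^ 5) +
          gpdf t * ((0 * t - 1 * 1) / t ^ 2 - (0 * t ^ 3 - 1 * ((3:ℕ) * t ^ 2)) / (t ^ 3) ^ 2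
            + (0 * t ^ 5 - 3 * ((5:ℕ) * t ^ 4)) / (t ^ 5) ^ 2)) - -(gpdf t) ≤ 0
      have h : ((-t * gpdf t) * (1 / t - 1 / t ^ 3 + 3 / t ^ 5) +
          gpdf t * ((0 * t - 1 * 1) / t ^ 2 - (0 * t ^ 3 - 1 * ((3:ℕ) * t ^ 2)) / (t ^ 3) ^ 2
            + (0 * t ^ 5 - 3 * ((5:ℕ) * t ^ 4)) / (t ^ 5) ^ 2)) - -(gpdf t)
          = -(15 * gpdf t / t ^ 6) := by
        push_cast
        field_simp
        ring
      rw [h, neg_nonpos]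
      have := gpdf_nonneg t
      positivity
    · have ha : Tendsto (fun t : ℝ => 1 / t - 1 / t ^ 3 + 3 / t ^ 5) atTop (𝓝 0) := by
        have h1 := tendsto_one_div_pow_atTop 1 one_ne_zero
        have h2 := tendsto_one_div_pow_atTop 3 three_ne_zero
        have h3 := (tendsto_one_div_pow_atTop 5 (by norm_num)).const_mul (3:ℝ)
        have := (h1.sub h2).add h3
        simp only [mul_zero, sub_zero, add_zero, mul_one_div] at this ⊢
        simpa using this
      have h1 : Tendsto (fun t : ℝ => gpdf t * (1 / t - 1 / t ^ 3 + 3 / t ^ 5)) atTop (𝓝 0) := by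
        simpa using gpdf_tendsto.mul ha
      simpa using h1.sub gQ_tendsto
  simpa using le_of_sub_nonneg (by simpa using key)

lemma gT_hasDeriv (x : ℝ) : HasDerivAt gT (-(gQ x)) x := by
  have h := (gpdf_hasDeriv x).sub ((hasDerivAt_id x).mul (gQ_hasDeriv x))
  have he : -x * gpdf x - (1 * gQ x + id x * -(gpdf x)) = -(gQ x) := by
    simp only [id_eq, one_mul]; ring
  rw [he] at h
  exact h

lemma gT_nonneg {x : ℝ} (hx : 1 ≤ x) : 0 ≤ gT x := by
  have h := mill_upper hx
  have hx0 : 0 < x := by linarith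
  rw [gT]
  rw [div_eq_mul_inv] at h
  have h2 : x * gQ x ≤ x * (gpdf x * x⁻¹) := mul_le_mul_of_nonneg_left h hx0.le
  have h3 : x * (gpdf x * x⁻¹) = gpdf x := by field_simp
  linarith

lemma gT_le {x : ℝ} (hx : 1 ≤ x) : gT x ≤ gpdf x / x ^ 2 := by
  have h := mill_lower hx
  have hx0 : 0 < x := by linarith
  have h2 : x * (gpdf x * (1 / x - 1 / x ^ 3)) ≤ x * gQ x :=
    mul_le_mul_of_nonneg_left h hx0.le
  have h3 : x * (gpdf x * (1 / x - 1 / x ^ 3)) = gpdf x - gpdf x / x ^ 2 := by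
    field_simp
  rw [gT]; linarith

lemma gT_ge {x : ℝ} (hx : 1 ≤ x) : gpdf x * (1 / x ^ 2 - 3 / x ^ 4) ≤ gT x := by
  have h := mill_upper' hx
  have hx0 : 0 < x := by linarith
  have h2 : x * gQ x ≤ x * (gpdf x * (1 / x - 1 / x ^ 3 + 3 / x ^ 5)) :=
    mul_le_mul_of_nonneg_left h hx0.le
  have h3 : x * (gpdf x * (1 / x - 1 / x ^ 3 + 3 / x ^ 5))
      = gpdf x - gpdf x * (1 / x ^ 2 - 3 / x ^ 4) := by
    field_simp; ring
  rw [gT]; linarith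

lemma gT_tendsto : Tendsto gT atTop (𝓝 0) := by
  refine tendsto_of_tendsto_of_tendsto_of_le_of_le' tendsto_const_nhds gpdf_tendsto ?_ ?_
  · filter_upwards [eventually_ge_atTop (1:ℝ)] with x hx using gT_nonneg hx
  · filter_upwards [eventually_ge_atTop (1:ℝ)] with x hx
    calc gT x ≤ gpdf x / x ^ 2 := gT_le hx
    _ ≤ gpdf x := by
        rw [div_le_iff₀ (by positivity)]
        nlinarith [mul_le_mul_of_nonneg_left (show (1:ℝ) ≤ x ^ 2 by nlinarith)
          (gpdf_nonneg x)]

/-- Step inequality: `(b-a) gQ(b) ≤ gT(a) - gT(b) ≤ (b-a) gQ(a)`. -/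
lemma gT_step {a b : ℝ} (hab : a ≤ b) :
    (b - a) * gQ b ≤ gT a - gT b ∧ gT a - gT b ≤ (b - a) * gQ a := by
  constructor
  · -- h t = gT t + t * gQ b antitone on [a,b]
    have hder : ∀ t : ℝ, HasDerivAt (fun t => gT t + t * gQ b) (-(gQ t) + gQ b) t := by
      intro t
      exact ((gT_hasDeriv t).add ((hasDerivAt_id t).mul_const (gQ b))).congr_deriv (by ring)
    have hanti : AntitoneOn (fun t => gT t + t * gQ b) (Set.Icc a b) := by
      refine antitoneOn_of_deriv_nonpos (convex_Icc a b) ?_ ?_ ?_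
      · exact fun t ht => (hder t).continuousAt.continuousWithinAt
      · intro t ht
        exact (hder t).differentiableAt.differentiableWithinAt
      · intro t ht
        rw [interior_Icc] at ht
        rw [(hder t).deriv]
        have := gQ_anti ht.2.le
        linarith
    have := hanti (Set.left_mem_Icc.2 hab) (Set.right_mem_Icc.2 hab) hab
    simp only at this
    nlinarith
  · have hder : ∀ t : ℝ, HasDerivAt (fun t => gT t + t * gQ a) (-(gQ t) + gQ a) t := by
      intro t
      exact ((gT_hasDeriv t).add ((hasDerivAt_id t).mul_const (gQ a))).congr_deriv (by ring)
    have hmono : MonotoneOn (fun t => gT t + t * gQ a) (Set.Icc a b) := by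
      refine monotoneOn_of_deriv_nonneg (convex_Icc a b) ?_ ?_ ?_
      · exact fun t ht => (hder t).continuousAt.continuousWithinAt
      · intro t ht
        exact (hder t).differentiableAt.differentiableWithinAt
      · intro t ht
        rw [interior_Icc] at ht
        rw [(hder t).deriv]
        have := gQ_anti ht.1.le
        linarith
    have := hmono (Set.left_mem_Icc.2 hab) (Set.right_mem_Icc.2 hab) hab
    simp only at this
    nlinarith

/-- Telescoping bounds for the tail sums. -/
lemma telescope {β : ℝ} (hβ : 0 < β) (N : ℕ) : ∀ M : ℕ, N ≤ M →
    (gT (N * β) - gT ((M + 1 : ℕ) * β)) / β ≤ (∑ i ∈ Finset.Icc N M, gQ (i * β)) ∧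
    (∑ i ∈ Finset.Icc N M, gQ (i * β)) ≤ gQ (N * β) + (gT (N * β) - gT (M * β)) / β := by
  refine Nat.le_induction ?_ ?_
  · have hstep := gT_step (a := (N:ℝ) * β) (b := ((N+1:ℕ):ℝ) * β)
      (by push_cast; nlinarith)
    have hd : ((N+1:ℕ):ℝ) * β - (N:ℝ) * β = β := by push_cast; ring
    rw [hd] at hstep
    constructor
    · rw [Finset.Icc_self, Finset.sum_singleton]
      rw [div_le_iff₀ hβ]
      calc gT ((N:ℝ) * β) - gT (((N+1:ℕ):ℝ) * β) ≤ β * gQ ((N:ℝ)*β) := hstep.2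
        _ = gQ ((N:ℝ)*β) * β := by ring
    · rw [Finset.Icc_self, Finset.sum_singleton]
      simp
  · intro M hM ih
    have hstep := gT_step (a := (M:ℝ) * β) (b := ((M+1:ℕ):ℝ) * β)
      (by push_cast; nlinarith)
    have hd : ((M+1:ℕ):ℝ) * β - (M:ℝ) * β = β := by push_cast; ring
    rw [hd] at hstep
    rw [Finset.sum_Icc_succ_top (by omega)]
    constructor
    · have h1 := ih.1
      have hstep2 := gT_step (a := ((M+1:ℕ):ℝ) * β) (b := ((M+1+1:ℕ):ℝ) * β)
        (by push_cast; nlinarith)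
      have hd2 : ((M+1+1:ℕ):ℝ) * β - ((M+1:ℕ):ℝ) * β = β := by push_cast; ring
      rw [hd2] at hstep2
      have h2 : (gT (((M+1:ℕ):ℝ) * β) - gT (((M+1+1:ℕ):ℝ) * β)) / β ≤ gQ (((M+1:ℕ):ℝ) * β) := by
        rw [div_le_iff₀ hβ]
        calc gT (((M+1:ℕ):ℝ) * β) - gT (((M+1+1:ℕ):ℝ) * β) ≤ β * gQ (((M+1:ℕ):ℝ) * β) :=
          hstep2.2
          _ = gQ (((M+1:ℕ):ℝ) * β) * β := by ring
      have := add_le_add h1 h2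
      refine le_trans (le_of_eq ?_) this
      push_cast
      field_simp
      try ring
    · have h1 := ih.2
      have h2 : gQ (((M+1:ℕ):ℝ) * β) ≤ (gT ((M:ℝ) * β) - gT (((M+1:ℕ):ℝ) * β)) / β := by
        rw [le_div_iff₀ hβ]
        calc gQ (((M+1:ℕ):ℝ) * β) * β = β * gQ (((M+1:ℕ):ℝ) * β) := by ring
          _ ≤ gT ((M:ℝ) * β) - gT (((M+1:ℕ):ℝ) * β) := hstep.1
      have := add_le_add h1 h2
      refine le_trans this (le_of_eq ?_)
      push_cast
      field_simp
      try ring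

lemma one_sub_ge_exp {q ε : ℝ} (hq0 : 0 ≤ q) (hqε : q ≤ ε) (hε : ε ≤ 1/2) :
    Real.exp (-((1 + 2*ε)*q)) ≤ 1 - q := by
  have h1 : (1 + 2*ε)*q + 1 ≤ Real.exp ((1 + 2*ε)*q) := Real.add_one_le_exp _
  have hε0 : 0 ≤ ε := le_trans hq0 hqε
  have hpos : 0 < (1 + 2*ε)*q + 1 := by nlinarith
  have h2 : Real.exp (-((1 + 2*ε)*q)) ≤ ((1 + 2*ε)*q + 1)⁻¹ := by
    rw [Real.exp_neg]
    exact inv_anti₀ hpos h1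
  refine h2.trans ?_
  rw [inv_le_iff_one_le_mul₀ hpos]
  have hq2 : q ≤ 1/2 := hqε.trans hε
  have hprod : 0 ≤ ε * (1/2 - q) := mul_nonneg hε0 (by linarith)
  have key : 0 ≤ q * (2*ε - q - 2*ε*q) := mul_nonneg hq0 (by nlinarith)
  nlinarith [key]

lemma one_sub_le_exp {q : ℝ} : 1 - q ≤ Real.exp (-q) := by
  have := Real.add_one_le_exp (-q)
  linarith

theorem prob_bounds
    {Ω : Type*} [MeasurableSpace Ω] (μ : Measure Ω) [IsProbabilityMeasure μ]
    (X : ℕ → Ω → ℝ) (hmeas : ∀ i, Measurable (X i))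
    (hindep : iIndepFun X μ)
    (hlaw : ∀ i, Measure.map (X i) μ = gaussianReal 0 1)
    {β : ℝ} (hβ : 0 < β) (N : ℕ) (hN1 : 1 ≤ (N:ℝ) * β) (hhalf : gQ ((N:ℝ)*β) ≤ 1/2) :
    Real.exp (-((1 + 2*gQ ((N:ℝ)*β)) * (gQ ((N:ℝ)*β) + gT ((N:ℝ)*β)/β)))
      ≤ (μ {ω | ∀ i : ℕ, N ≤ i → X i ω ≤ (i:ℝ) * β}).toReal ∧
    (μ {ω | ∀ i : ℕ, N ≤ i → X i ω ≤ (i:ℝ) * β}).toReal ≤ Real.exp (-(gT ((N:ℝ)*β)/β)) := by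
  set ε := gQ ((N:ℝ)*β) with hεdef
  -- single events
  have hone : ∀ (i : ℕ) (c : ℝ), μ {ω | X i ω ≤ c} = ENNReal.ofReal (1 - gQ c) := by
    intro i c
    have h1 : {ω | X i ω ≤ c} = X i ⁻¹' Set.Iic c := rfl
    rw [h1, ← Measure.map_apply (hmeas i) measurableSet_Iic, hlaw i,
      gaussianReal_apply_eq_integral 0 one_ne_zero, gQ_eq_one_sub, ← gpdf_def]
    ring_nf
  -- finite intersections
  set E : ℕ → Set Ω := fun M => ⋂ i ∈ Finset.Icc N M, {ω | X i ω ≤ (i:ℝ) * β} with hEdef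
  have hEmeas : ∀ M, MeasurableSet (E M) := by
    intro M
    exact MeasurableSet.biInter (Finset.Icc N M).countable_toSet
      (fun i _ => (hmeas i) measurableSet_Iic)
  have hEM : ∀ M, μ (E M) = ∏ i ∈ Finset.Icc N M, ENNReal.ofReal (1 - gQ ((i:ℝ)*β)) := by
    intro M
    show μ (⋂ i ∈ Finset.Icc N M, X i ⁻¹' Set.Iic ((i:ℝ) * β)) = _
    rw [hindep.meas_biInter (fun i _ => ⟨Set.Iic ((i:ℝ)*β), measurableSet_Iic, rfl⟩)]
    exact Finset.prod_congr rfl fun i _ => hone i _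
  have hEMreal : ∀ M, (μ (E M)).toReal = ∏ i ∈ Finset.Icc N M, (1 - gQ ((i:ℝ)*β)) := by
    intro M
    rw [hEM, ENNReal.toReal_prod]
    exact Finset.prod_congr rfl fun i _ =>
      ENNReal.toReal_ofReal (by linarith [gQ_le_one ((i:ℝ)*β)])
  -- the full event is the intersection
  have hInter : (⋂ M, E M) = {ω | ∀ i : ℕ, N ≤ i → X i ω ≤ (i:ℝ) * β} := by
    ext ω
    simp only [hEdef, Set.mem_iInter, Finset.mem_Icc, Set.mem_setOf_eq]
    constructor
    · intro h i hi
      exact h i i ⟨hi, le_rfl⟩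
    · intro h M i hi
      exact h i hi.1
  have hAnti : Antitone E := by
    intro M M' hMM' ω hω
    simp only [hEdef, Set.mem_iInter, Finset.mem_Icc] at hω ⊢
    intro i hi
    exact hω i ⟨hi.1, hi.2.trans hMM'⟩
  have hlim : Tendsto (fun M => (μ (E M)).toReal) atTop
      (𝓝 ((μ {ω | ∀ i : ℕ, N ≤ i → X i ω ≤ (i:ℝ) * β}).toReal)) := by
    have h1 := tendsto_measure_iInter_atTop (μ := μ)
      (fun M => (hEmeas M).nullMeasurableSet) hAnti ⟨0, measure_ne_top μ _⟩
    rw [hInter] at h1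
    exact (ENNReal.tendsto_toReal (measure_ne_top μ _)).comp h1
  -- sum bounds
  have hqle : ∀ i : ℕ, N ≤ i → gQ ((i:ℝ)*β) ≤ ε := by
    intro i hi
    refine gQ_anti ?_
    have h : (N:ℝ) ≤ i := by exact_mod_cast hi
    nlinarith
  have hε0 : 0 ≤ ε := gQ_nonneg _
  constructor
  · -- lower bound
    refine ge_of_tendsto hlim ?_
    filter_upwards [eventually_ge_atTop N] with M hM
    rw [hEMreal]
    have h1 : Real.exp (-((1 + 2*ε) * (ε + gT ((N:ℝ)*β)/β)))
        ≤ Real.exp (-((1 + 2*ε) * (∑ i ∈ Finset.Icc N M, gQ ((i:ℝ)*β)))) := by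
      apply Real.exp_le_exp.2
      have hsum_le : (∑ i ∈ Finset.Icc N M, gQ ((i:ℝ)*β)) ≤ ε + gT ((N:ℝ)*β)/β := by
        refine (telescope hβ N M hM).2.trans ?_
        have hTM : 0 ≤ gT ((M:ℝ)*β) := by
          refine gT_nonneg ?_
          have : (N:ℝ) ≤ M := by exact_mod_cast hM
          nlinarith
        have hdd : (gT ((N:ℝ)*β) - gT ((M:ℝ)*β))/β ≤ gT ((N:ℝ)*β)/β := by
          exact (div_le_div_iff_of_pos_right hβ).mpr (by linarith)
        linarith
      have h1ε : 0 ≤ 1 + 2*ε := by linarith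
      nlinarith
    refine h1.trans ?_
    have h2 : Real.exp (-((1 + 2*ε) * (∑ i ∈ Finset.Icc N M, gQ ((i:ℝ)*β))))
        = ∏ i ∈ Finset.Icc N M, Real.exp (-((1+2*ε) * gQ ((i:ℝ)*β))) := by
      rw [← Real.exp_sum]
      congr 1
      rw [Finset.mul_sum, ← Finset.sum_neg_distrib]
    rw [h2]
    refine Finset.prod_le_prod (fun i _ => (Real.exp_pos _).le) ?_
    intro i hi
    rw [Finset.mem_Icc] at hi
    exact one_sub_ge_exp (gQ_nonneg _) (hqle i hi.1) hhalf
  · -- upper bound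
    have hub : Tendsto (fun M : ℕ => Real.exp (-((gT ((N:ℝ)*β) - gT (((M+1:ℕ):ℝ)*β))/β)))
        atTop (𝓝 (Real.exp (-(gT ((N:ℝ)*β)/β)))) := by
      have hM1 : Tendsto (fun M : ℕ => ((M+1:ℕ):ℝ)*β) atTop atTop := by
        apply Tendsto.atTop_mul_const hβ
        exact_mod_cast (tendsto_natCast_atTop_atTop (R := ℝ)).comp (tendsto_add_atTop_nat 1)
      have h0 : Tendsto (fun M : ℕ => gT (((M+1:ℕ):ℝ)*β)) atTop (𝓝 0) :=
        gT_tendsto.comp hM1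
      have := ((tendsto_const_nhds (x := gT ((N:ℝ)*β))).sub h0).div_const β
      have h2 := this.neg
      simp only [sub_zero] at h2
      exact (Real.continuous_exp.tendsto _).comp h2
    refine le_of_tendsto_of_tendsto hlim hub ?_
    filter_upwards [eventually_ge_atTop N] with M hM
    rw [hEMreal]
    calc (∏ i ∈ Finset.Icc N M, (1 - gQ ((i:ℝ)*β)))
        ≤ ∏ i ∈ Finset.Icc N M, Real.exp (-(gQ ((i:ℝ)*β))) := by
          refine Finset.prod_le_prod (fun i _ => by linarith [gQ_le_one ((i:ℝ)*β)]) ?_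
          exact fun i _ => one_sub_le_exp
      _ = Real.exp (-(∑ i ∈ Finset.Icc N M, gQ ((i:ℝ)*β))) := by
          rw [← Real.exp_sum, Finset.sum_neg_distrib]
      _ ≤ Real.exp (-((gT ((N:ℝ)*β) - gT (((M+1:ℕ):ℝ)*β))/β)) := by
          apply Real.exp_le_exp.2
          have := (telescope hβ N M hM).1
          linarith

lemma gc_pos : 0 < gc := by
  rw [inv_pos]; exact Real.sqrt_pos.2 (by positivity)

lemma log_gc_neg : Real.log gc < 0 := by
  refine Real.log_neg gc_pos ?_
  rw [inv_lt_one_iff₀]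
  right
  have : (1:ℝ) < 2 * π := by nlinarith [Real.pi_gt_three]
  nlinarith [Real.sq_sqrt (by positivity : (0:ℝ) ≤ 2*π), Real.sqrt_nonneg (2*π)]

lemma log_rpow_eq : Real.log ((2 * π) ^ (-(1 : ℝ) / 2)) = Real.log gc := by
  rw [Real.log_rpow (by positivity), Real.log_inv, Real.log_sqrt (by positivity)]
  ring

lemma tendsto_L : Tendsto (fun β : ℝ => Real.log β⁻¹) (𝓝[>] (0:ℝ)) atTop :=
  Real.tendsto_log_atTop.comp tendsto_inv_nhdsGT_zero

lemma log_two_t_div (t : ℝ) (ht : 0 < t) : Real.log (2 * t) = Real.log 2 + Real.log t :=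
  Real.log_mul two_ne_zero (ne_of_gt ht)

lemma tendsto_log2t_div : Tendsto (fun t : ℝ => Real.log (2 * t) / t) atTop (𝓝 0) := by
  have h1 : Tendsto (fun t : ℝ => Real.log t / t) atTop (𝓝 0) :=
    Real.isLittleO_log_id_atTop.tendsto_div_nhds_zero
  have h2 : Tendsto (fun t : ℝ => Real.log 2 / t) atTop (𝓝 0) :=
    tendsto_const_nhds.div_atTop tendsto_id
  have h3 := h2.add h1
  rw [add_zero] at h3
  refine h3.congr' ?_
  filter_upwards [eventually_gt_atTop (0:ℝ)] with t ht
  rw [log_two_t_div t ht, add_div]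

/-- master eventuality at `atTop` for `t = log β⁻¹` -/
lemma master_t : ∀ᶠ t : ℝ in atTop,
    1 ≤ t ∧ t / 2 ≤ t - Real.log (2 * t) + Real.log gc ∧
      t - Real.log (2 * t) + Real.log gc ≤ t := by
  have h1 : ∀ᶠ t : ℝ in atTop, Real.log (2 * t) / t < 1/4 :=
    tendsto_log2t_div.eventually_lt_const (by norm_num)
  filter_upwards [h1, eventually_ge_atTop (1:ℝ),
    eventually_ge_atTop (4 * |Real.log gc|)] with t h1 h2 h3
  have ht0 : 0 < t := by linarith
  have hlog : Real.log (2 * t) < t / 4 := by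
    rw [div_lt_iff₀ ht0] at h1; linarith
  have habs : |Real.log gc| ≤ t / 4 := by linarith
  have h4 : -(t/4) ≤ Real.log gc := by
    rcases abs_le.1 habs with ⟨h, _⟩; linarith
  have hlog2 : 0 ≤ Real.log (2 * t) := by
    rw [log_two_t_div t ht0]
    have := Real.log_nonneg h2
    have := Real.log_nonneg (by norm_num : (1:ℝ) ≤ 2)
    linarith
  refine ⟨h2, by nlinarith [log_gc_neg], by nlinarith [log_gc_neg]⟩

/-- master eventuality for β near 0+. -/
lemma master_β (K : ℝ) : ∀ᶠ β in 𝓝[>] (0:ℝ),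
    0 < β ∧ 1 ≤ Real.log β⁻¹ ∧
    (aNorm β) ^ 2 = 2 * (Real.log β⁻¹ - Real.log (2 * Real.log β⁻¹) + Real.log gc) ∧
    0 < aNorm β ∧
    Real.log β⁻¹ ≤ (aNorm β) ^ 2 ∧ (aNorm β) ^ 2 ≤ 2 * Real.log β⁻¹ ∧
    K ≤ aNorm β := by
  have hK : ∀ᶠ t : ℝ in atTop, (1:ℝ) ≤ t ∧ t / 2 ≤ t - Real.log (2*t) + Real.log gc ∧
      t - Real.log (2*t) + Real.log gc ≤ t ∧ K^2 ≤ t :=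
    (master_t.and (eventually_ge_atTop (K^2))).mono (fun t ⟨⟨a,b,c⟩,d⟩ => ⟨a,b,c,d⟩)
  filter_upwards [tendsto_L.eventually hK, self_mem_nhdsWithin] with β h hβ
  obtain ⟨h1, h2, h3, h4⟩ := h
  have hβ0 : (0:ℝ) < β := hβ
  set t := Real.log β⁻¹ with htdef
  have hinner : 0 ≤ t - Real.log (2*t) + Real.log gc := by linarith
  have ha2 : (aNorm β)^2 = 2 * (t - Real.log (2*t) + Real.log gc) := by
    rw [aNorm, log_rpow_eq, Real.sq_sqrt (by linarith)]
  have ha0 : 0 < aNorm β := by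
    rw [aNorm, log_rpow_eq]
    apply Real.sqrt_pos.2
    nlinarith
  refine ⟨hβ0, h1, ha2, ha0, by nlinarith, by nlinarith, ?_⟩
  -- K ≤ aNorm β : aNorm β ^2 ≥ t ≥ K^2, aNorm β > 0
  nlinarith [abs_nonneg K, sq_abs K, le_abs_self K]

lemma tendsto_aNorm : Tendsto aNorm (𝓝[>] (0:ℝ)) atTop := by
  refine tendsto_atTop.2 fun K => ?_
  filter_upwards [master_β K] with β h
  exact h.2.2.2.2.2.2

lemma tendsto_mul_exp : Tendsto (fun t : ℝ => Real.exp (-t) * (2*t)) atTop (𝓝 0) := by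
  have h := tendsto_pow_mul_exp_neg_atTop_nhds_zero 1
  have h2 := h.const_mul (2:ℝ)
  rw [mul_zero] at h2
  refine h2.congr (fun t => ?_)
  simp [pow_one]; ring

lemma tendsto_beta_aNorm : Tendsto (fun β => β * aNorm β) (𝓝[>] (0:ℝ)) (𝓝 0) := by
  have hcomp : Tendsto (fun β : ℝ => Real.exp (-(Real.log β⁻¹)) * (2 * Real.log β⁻¹))
      (𝓝[>] (0:ℝ)) (𝓝 0) := tendsto_mul_exp.comp tendsto_L
  refine tendsto_of_tendsto_of_tendsto_of_le_of_le' tendsto_const_nhds hcomp ?_ ?_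
  · filter_upwards [master_β 0] with β h
    exact mul_nonneg h.1.le h.2.2.2.1.le
  · filter_upwards [master_β 1, hcomp.eventually (Eventually.of_forall fun _ => trivial)]
      with β h _
    obtain ⟨hβ0, ht1, ha2, ha0, hlow, hupp, _⟩ := h
    have hβeq : Real.exp (-(Real.log β⁻¹)) = β := by
      rw [Real.log_inv, neg_neg, Real.exp_log hβ0]
    rw [hβeq]
    -- β * aNorm β ≤ β * (2 * log β⁻¹) since aNorm β ≤ √(2L) ≤ 2L  (L ≥ 1)
    have haup : aNorm β ≤ 2 * Real.log β⁻¹ := by nlinarith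
    nlinarith

section withy
variable (y : ℝ)

lemma tendsto_beta_id : Tendsto (fun β : ℝ => β) (𝓝[>] (0:ℝ)) (𝓝 0) :=
  tendsto_id.mono_left nhdsWithin_le_nhds

lemma tendsto_y_div_a : Tendsto (fun β => y / aNorm β) (𝓝[>] (0:ℝ)) (𝓝 0) :=
  Tendsto.div_atTop tendsto_const_nhds tendsto_aNorm

lemma ev_v (K : ℝ) : ∀ᶠ β in 𝓝[>] (0:ℝ),
    K ≤ aNorm β + y / aNorm β := by
  filter_upwards [master_β (max (|y| + 1) (K + 1))] with β h
  obtain ⟨hβ0, ht1, ha2, ha0, hlow, hupp, hK⟩ := h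
  have h1 : |y| + 1 ≤ aNorm β := le_trans (le_max_left _ _) hK
  have h2 : K + 1 ≤ aNorm β := le_trans (le_max_right _ _) hK
  have h3 : y / aNorm β ≥ -1 := by
    rw [ge_iff_le, neg_le, ← neg_div]
    rw [div_le_one ha0]
    calc -y ≤ |y| := neg_le_abs y
      _ ≤ aNorm β := by linarith
  linarith

lemma tendsto_v : Tendsto (fun β => aNorm β + y / aNorm β) (𝓝[>] (0:ℝ)) atTop :=
  tendsto_atTop.2 fun K => (ev_v y K).mono fun _ h => h

lemma tendsto_beta_v :
    Tendsto (fun β => β * (aNorm β + y / aNorm β)) (𝓝[>] (0:ℝ)) (𝓝 0) := by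
  have h := tendsto_beta_aNorm.add ((tendsto_beta_id).mul (tendsto_y_div_a y))
  simp only [add_zero, zero_mul] at h
  refine h.congr (fun β => by ring)

lemma tendsto_asq_ratio :
    Tendsto (fun β => (aNorm β) ^ 2 / (2 * Real.log β⁻¹)) (𝓝[>] (0:ℝ)) (𝓝 1) := by
  have hrhs : Tendsto (fun β : ℝ => 1 - Real.log (2 * Real.log β⁻¹) / Real.log β⁻¹
      + Real.log gc / Real.log β⁻¹) (𝓝[>] (0:ℝ)) (𝓝 1) := by
    have h1 : Tendsto (fun β : ℝ => Real.log (2 * Real.log β⁻¹) / Real.log β⁻¹)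
        (𝓝[>] (0:ℝ)) (𝓝 0) := tendsto_log2t_div.comp tendsto_L
    have h2 : Tendsto (fun β : ℝ => Real.log gc / Real.log β⁻¹) (𝓝[>] (0:ℝ)) (𝓝 0) :=
      Tendsto.div_atTop tendsto_const_nhds tendsto_L
    have := (tendsto_const_nhds (x := (1:ℝ))).sub h1 |>.add h2
    simpa using this
  refine hrhs.congr' ?_
  filter_upwards [master_β 0] with β h
  obtain ⟨hβ0, ht1, ha2, ha0, _, _, _⟩ := h
  have ht0 : (0:ℝ) < Real.log β⁻¹ := by linarith
  have htne : Real.log β⁻¹ ≠ 0 := ne_of_gt ht0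
  rw [ha2, mul_div_mul_left _ _ (two_ne_zero), add_div, sub_div, div_self htne]

lemma tendsto_vsq_ratio :
    Tendsto (fun β => (aNorm β + y / aNorm β) ^ 2 / (2 * Real.log β⁻¹))
      (𝓝[>] (0:ℝ)) (𝓝 1) := by
  have h1 := tendsto_asq_ratio
  have h2 : Tendsto (fun β : ℝ => y / Real.log β⁻¹) (𝓝[>] (0:ℝ)) (𝓝 0) :=
    Tendsto.div_atTop tendsto_const_nhds tendsto_L
  have h3 : Tendsto (fun β : ℝ => (y / aNorm β) ^ 2 / (2 * Real.log β⁻¹))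
      (𝓝[>] (0:ℝ)) (𝓝 0) := by
    refine Tendsto.div_atTop (a := 0) ?_ ((tendsto_const_mul_atTop_of_pos (by norm_num)).2 tendsto_L)
    have := (tendsto_y_div_a y).pow 2
    simpa using this
  have hsum := (h1.add h2).add h3
  simp only [add_zero] at hsum
  refine hsum.congr' ?_
  filter_upwards [master_β 0] with β h
  obtain ⟨hβ0, ht1, ha2, ha0, _, _, _⟩ := h
  have ht0 : (0:ℝ) < Real.log β⁻¹ := by linarith
  have hane : aNorm β ≠ 0 := ne_of_gt ha0
  have hexp : (aNorm β + y / aNorm β) ^ 2 = (aNorm β) ^ 2 + 2 * y + (y / aNorm β) ^ 2 := by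
    field_simp
    ring
  rw [hexp, add_div, add_div, mul_div_mul_left y _ (two_ne_zero)]

lemma tendsto_two_t_div_vsq :
    Tendsto (fun β => (2 * Real.log β⁻¹) / (aNorm β + y / aNorm β) ^ 2)
      (𝓝[>] (0:ℝ)) (𝓝 1) := by
  have h := (tendsto_vsq_ratio y).inv₀ one_ne_zero
  rw [inv_one] at h
  refine h.congr' ?_
  filter_upwards [master_β 0, ev_v y 1] with β hm hv
  obtain ⟨hβ0, ht1, ha2, ha0, _, _, _⟩ := hm
  have ht0 : (0:ℝ) < Real.log β⁻¹ := by linarith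
  have hv0 : (0:ℝ) < aNorm β + y / aNorm β := by linarith
  rw [inv_div]

lemma hub_event : ∀ᶠ β in 𝓝[>] (0:ℝ),
    gpdf (aNorm β + y / aNorm β) / (β * (aNorm β + y / aNorm β) ^ 2)
      = Real.exp (-y) * Real.exp (-(y ^ 2) / (2 * (aNorm β) ^ 2))
        * ((2 * Real.log β⁻¹) / (aNorm β + y / aNorm β) ^ 2) := by
  filter_upwards [master_β (|y| + 1), ev_v y 1] with β hm hv
  obtain ⟨hβ0, ht1, ha2, ha0, hlow, hupp, hK⟩ := hm
  set a := aNorm β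
  set t := Real.log β⁻¹ with htdef
  have ht0 : (0:ℝ) < t := by linarith
  have hv0 : (0:ℝ) < a + y / a := by linarith
  have hane : a ≠ 0 := ne_of_gt ha0
  have key : gpdf (a + y / a) = β * (2 * t) * Real.exp (-y)
      * Real.exp (-(y ^ 2) / (2 * a ^ 2)) := by
    rw [gpdf_eq]
    have hsplit : -((a + y / a) ^ 2) / 2
        = -(a ^ 2) / 2 + (-y + -(y ^ 2) / (2 * a ^ 2)) := by
      field_simp
      ring
    rw [hsplit, Real.exp_add, Real.exp_add]
    have hexp_a : Real.exp (-(a ^ 2) / 2) = β * (2 * t) * gc⁻¹ := by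
      have h1 : -(a ^ 2) / 2 = -t + (Real.log (2 * t) + -(Real.log gc)) := by
        rw [ha2]; ring
      rw [h1, Real.exp_add, Real.exp_add]
      have e1 : Real.exp (-t) = β := by
        rw [htdef, Real.log_inv, neg_neg, Real.exp_log hβ0]
      have e2 : Real.exp (Real.log (2 * t)) = 2 * t := Real.exp_log (by linarith)
      have e3 : Real.exp (-(Real.log gc)) = gc⁻¹ := by
        rw [Real.exp_neg, Real.exp_log gc_pos]
      rw [e1, e2, e3]
      ring
    rw [hexp_a]
    field_simp
  have hβne : β ≠ 0 := ne_of_gt hβ0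
  have hvne : a + y / a ≠ 0 := ne_of_gt hv0
  have hx : β * (2 * t) * Real.exp (-y) * Real.exp (-(y ^ 2) / (2 * a ^ 2))
      = β * ((2 * t) * Real.exp (-y) * Real.exp (-(y ^ 2) / (2 * a ^ 2))) := by ring
  rw [key, hx, mul_div_mul_left _ _ hβne]
  ring

lemma tendsto_hub :
    Tendsto (fun β => gpdf (aNorm β + y / aNorm β) / (β * (aNorm β + y / aNorm β) ^ 2))
      (𝓝[>] (0:ℝ)) (𝓝 (Real.exp (-y))) := by
  have h1 : Tendsto (fun β => Real.exp (-(y ^ 2) / (2 * (aNorm β) ^ 2)))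
      (𝓝[>] (0:ℝ)) (𝓝 1) := by
    rw [show (1:ℝ) = Real.exp 0 by simp]
    refine (Real.continuous_exp.tendsto _).comp ?_
    refine Tendsto.div_atTop tendsto_const_nhds ?_
    exact (tendsto_const_mul_atTop_of_pos (by norm_num)).2
      ((tendsto_pow_atTop two_ne_zero).comp tendsto_aNorm)
  have h2 := ((tendsto_const_nhds (x := Real.exp (-y))).mul h1).mul (tendsto_two_t_div_vsq y)
  simp only [mul_one] at h2
  exact h2.congr' ((hub_event y).mono fun _ h => h.symm)
  
end withy

section withy2
variable (y : ℝ)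

/-- the shifted main limit -/
lemma tendsto_hub2 :
    Tendsto (fun β => gpdf ((aNorm β + y / aNorm β) + β)
        / (β * ((aNorm β + y / aNorm β) + β) ^ 2))
      (𝓝[>] (0:ℝ)) (𝓝 (Real.exp (-y))) := by
  have hexp1 : Tendsto (fun β => Real.exp (-((aNorm β + y / aNorm β) * β) - β ^ 2 / 2))
      (𝓝[>] (0:ℝ)) (𝓝 1) := by
    rw [show (1:ℝ) = Real.exp 0 by simp]
    refine (Real.continuous_exp.tendsto _).comp ?_
    have h1 : Tendsto (fun β => (aNorm β + y / aNorm β) * β) (𝓝[>] (0:ℝ)) (𝓝 0) :=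
      (tendsto_beta_v y).congr (fun β => by ring)
    have h2 : Tendsto (fun β : ℝ => β ^ 2 / 2) (𝓝[>] (0:ℝ)) (𝓝 0) := by
      have := ((tendsto_beta_id).pow 2).div_const (2:ℝ)
      simpa using this
    have := (h1.neg).sub h2
    simpa using this
  have hrat : Tendsto (fun β => (aNorm β + y / aNorm β) ^ 2
      / ((aNorm β + y / aNorm β) + β) ^ 2) (𝓝[>] (0:ℝ)) (𝓝 1) := by
    have hg : Tendsto (fun β => ((aNorm β + y / aNorm β) + β) / (aNorm β + y / aNorm β))
        (𝓝[>] (0:ℝ)) (𝓝 1) := by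
      have hβv : Tendsto (fun β => β / (aNorm β + y / aNorm β)) (𝓝[>] (0:ℝ)) (𝓝 0) :=
        Tendsto.div_atTop tendsto_beta_id (tendsto_v y)
      have := (tendsto_const_nhds (x := (1:ℝ))).add hβv
      rw [add_zero] at this
      refine this.congr' ?_
      filter_upwards [ev_v y 1] with β hv
      have hvne : aNorm β + y / aNorm β ≠ 0 := by intro h; rw [h] at hv; linarith
      rw [add_div, div_self hvne]
    have h2 := (hg.pow 2).inv₀ (by norm_num)
    simp only [one_pow, inv_one] at h2
    refine h2.congr' ?_
    filter_upwards [ev_v y 1] with β hv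
    have hvne : aNorm β + y / aNorm β ≠ 0 := by intro h; rw [h] at hv; linarith
    rw [div_pow, inv_div]
  have h := ((tendsto_hub y).mul hexp1).mul hrat
  simp only [mul_one] at h
  refine h.congr' ?_
  filter_upwards [ev_v y 1, self_mem_nhdsWithin] with β hv hβ
  have hβ0 : (0:ℝ) < β := hβ
  set v := aNorm β + y / aNorm β with hvdef
  have hv0 : (0:ℝ) < v := by linarith
  have hkey : gpdf (v + β) = gpdf v * Real.exp (-(v * β) - β ^ 2 / 2) := by
    rw [gpdf_eq, gpdf_eq, mul_assoc, ← Real.exp_add]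
    congr 1
    ring
  rw [hkey]
  have hvne : v ≠ 0 := ne_of_gt hv0
  have hβne : β ≠ 0 := ne_of_gt hβ0
  have hvβne : v + β ≠ 0 := by positivity
  field_simp

/-- facts about `x0 = ⌈uNorm β y⌉₊ * β` -/
lemma ev_x0 : ∀ᶠ β in 𝓝[>] (0:ℝ),
    0 < β ∧ 3 ≤ aNorm β + y / aNorm β ∧
    aNorm β + y / aNorm β ≤ (⌈uNorm β y⌉₊ : ℝ) * β ∧
    (⌈uNorm β y⌉₊ : ℝ) * β ≤ (aNorm β + y / aNorm β) + β := by
  filter_upwards [ev_v y 3, self_mem_nhdsWithin] with β hv hβ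
  have hβ0 : (0:ℝ) < β := hβ
  set v := aNorm β + y / aNorm β with hvdef
  have hu : uNorm β y = v / β := rfl
  have hu0 : 0 ≤ uNorm β y := by rw [hu]; positivity
  have h1 : uNorm β y ≤ (⌈uNorm β y⌉₊ : ℝ) := Nat.le_ceil _
  have h2 : (⌈uNorm β y⌉₊ : ℝ) < uNorm β y + 1 := Nat.ceil_lt_add_one hu0
  refine ⟨hβ0, hv, ?_, ?_⟩
  · calc v = (v / β) * β := by field_simp
      _ ≤ (⌈uNorm β y⌉₊ : ℝ) * β := by
          rw [← hu]
          exact mul_le_mul_of_nonneg_right h1 hβ0.le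
  · calc (⌈uNorm β y⌉₊ : ℝ) * β ≤ (uNorm β y + 1) * β :=
        mul_le_mul_of_nonneg_right h2.le hβ0.le
      _ = v + β := by rw [hu]; field_simp

/-- `gpdf v / v → 0`. -/
lemma tendsto_gpdf_v_div_v :
    Tendsto (fun β => gpdf (aNorm β + y / aNorm β) / (aNorm β + y / aNorm β))
      (𝓝[>] (0:ℝ)) (𝓝 0) := by
  have h := (tendsto_hub y).mul (tendsto_beta_v y)
  rw [mul_zero] at h
  refine h.congr' ?_
  filter_upwards [ev_v y 1, self_mem_nhdsWithin] with β hv hβ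
  have hβ0 : (0:ℝ) < β := hβ
  have hv0 : (0:ℝ) < aNorm β + y / aNorm β := by linarith
  field_simp

/-- `gQ (x0 β) → 0`. -/
lemma tendsto_gQ_x0 :
    Tendsto (fun β => gQ ((⌈uNorm β y⌉₊ : ℝ) * β)) (𝓝[>] (0:ℝ)) (𝓝 0) := by
  refine tendsto_of_tendsto_of_tendsto_of_le_of_le' tendsto_const_nhds
    (tendsto_gpdf_v_div_v y) (Eventually.of_forall fun β => gQ_nonneg _) ?_
  filter_upwards [ev_x0 y] with β h
  obtain ⟨hβ0, hv3, hvx, hxvβ⟩ := h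
  set v := aNorm β + y / aNorm β
  set x0 := (⌈uNorm β y⌉₊ : ℝ) * β
  have hx1 : (1:ℝ) ≤ x0 := by linarith
  have hv0 : (0:ℝ) < v := by linarith
  calc gQ x0 ≤ gpdf x0 / x0 := mill_upper hx1
    _ ≤ gpdf v / x0 := div_le_div_of_nonneg_right (gpdf_anti hv0.le hvx) (by linarith)
    _ ≤ gpdf v / v := div_le_div_of_nonneg_left (gpdf_nonneg v) hv0 hvx

/-- `gT (x0 β) / β → exp (-y)`. -/
lemma tendsto_gT_x0 :
    Tendsto (fun β => gT ((⌈uNorm β y⌉₊ : ℝ) * β) / β) (𝓝[>] (0:ℝ))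
      (𝓝 (Real.exp (-y))) := by
  have hc3 : Tendsto (fun β => gpdf (aNorm β + y / aNorm β)
      / (β * (aNorm β + y / aNorm β) ^ 2) * (3 / (aNorm β + y / aNorm β) ^ 2))
      (𝓝[>] (0:ℝ)) (𝓝 0) := by
    have h2 : Tendsto (fun β => 3 / (aNorm β + y / aNorm β) ^ 2) (𝓝[>] (0:ℝ)) (𝓝 0) :=
      Tendsto.div_atTop tendsto_const_nhds ((tendsto_pow_atTop two_ne_zero).comp (tendsto_v y))
    have := (tendsto_hub y).mul h2
    rwa [mul_zero] at this
  have hlb : Tendsto (fun β => gpdf ((aNorm β + y / aNorm β) + β)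
      / (β * ((aNorm β + y / aNorm β) + β) ^ 2)
      - gpdf (aNorm β + y / aNorm β) / (β * (aNorm β + y / aNorm β) ^ 2)
        * (3 / (aNorm β + y / aNorm β) ^ 2)) (𝓝[>] (0:ℝ)) (𝓝 (Real.exp (-y))) := by
    have := (tendsto_hub2 y).sub hc3
    rwa [sub_zero] at this
  refine tendsto_of_tendsto_of_tendsto_of_le_of_le' hlb (tendsto_hub y) ?_ ?_
  · -- lower bound
    filter_upwards [ev_x0 y] with β h
    obtain ⟨hβ0, hv3, hvx, hxvβ⟩ := h
    set v := aNorm β + y / aNorm β with hvdef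
    set x0 := (⌈uNorm β y⌉₊ : ℝ) * β with hx0def
    have hx1 : (1:ℝ) ≤ x0 := by linarith
    have hv0 : (0:ℝ) < v := by linarith
    have hx00 : (0:ℝ) < x0 := by linarith
    have hTge := gT_ge hx1
    have hA : gpdf (v + β) / (v + β) ^ 2 ≤ gpdf x0 / x0 ^ 2 := by
      refine div_le_div₀ (gpdf_nonneg _) (gpdf_anti hx00.le hxvβ) (by positivity) ?_
      exact pow_le_pow_left₀ hx00.le hxvβ 2
    have hB : 3 * gpdf x0 / x0 ^ 4 ≤ 3 * gpdf v / v ^ 4 := by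
      refine div_le_div₀ (mul_nonneg (by norm_num) (gpdf_nonneg v)) ?_ (by positivity) ?_
      · nlinarith [gpdf_anti hv0.le hvx]
      · exact pow_le_pow_left₀ hv0.le hvx 4
    have hsplit : gpdf x0 * (1 / x0 ^ 2 - 3 / x0 ^ 4)
        = gpdf x0 / x0 ^ 2 - 3 * gpdf x0 / x0 ^ 4 := by ring
    have hTlb : gpdf (v + β) / (v + β) ^ 2 - 3 * gpdf v / v ^ 4 ≤ gT x0 := by
      rw [hsplit] at hTge
      linarith
    have hdiv := div_le_div_of_nonneg_right hTlb hβ0.le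
    refine le_trans (le_of_eq ?_) hdiv
    have hβne : β ≠ 0 := ne_of_gt hβ0
    have hvne : v ≠ 0 := by intro h; rw [h] at hv3; linarith
    have hvβne : v + β ≠ 0 := by intro h; nlinarith
    field_simp
  · -- upper bound
    filter_upwards [ev_x0 y] with β h
    obtain ⟨hβ0, hv3, hvx, hxvβ⟩ := h
    set v := aNorm β + y / aNorm β with hvdef
    set x0 := (⌈uNorm β y⌉₊ : ℝ) * β with hx0def
    have hx1 : (1:ℝ) ≤ x0 := by linarith
    have hv0 : (0:ℝ) < v := by linarith
    have hx00 : (0:ℝ) < x0 := by linarith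
    have hub : gT x0 ≤ gpdf v / v ^ 2 := by
      refine (gT_le hx1).trans ?_
      refine div_le_div₀ (gpdf_nonneg _) (gpdf_anti hv0.le hvx) (by positivity) ?_
      exact pow_le_pow_left₀ hv0.le hvx 2
    calc gT x0 / β ≤ (gpdf v / v ^ 2) / β :=
          div_le_div_of_nonneg_right hub hβ0.le
      _ = gpdf v / (β * v ^ 2) := by
          rw [div_div, mul_comm]
end withy2

/-- For an i.i.d. standard normal sequence `{ξ_i}_{i≥0}`, the last exit time
`τ(ξ) = max{i ≥ 0 : ξ_i > βi}` satisfies `P(τ(ξ) ≤ u_β(y)) → exp(-e^{-y})` as `β → 0⁺`,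
where `{τ(ξ) ≤ u_β(y)} = {ξ_i ≤ iβ for all integers i ≥ u_β(y)}`. -/
theorem lastExit_limit
    {Ω : Type*} [MeasurableSpace Ω] (μ : Measure Ω) [IsProbabilityMeasure μ]
    (X : ℕ → Ω → ℝ) (hmeas : ∀ i, Measurable (X i))
    (hindep : iIndepFun X μ)
    (hlaw : ∀ i, Measure.map (X i) μ = gaussianReal 0 1) (y : ℝ) :
    Tendsto (fun β : ℝ =>
        (μ {ω | ∀ i : ℕ, uNorm β y ≤ (i : ℝ) → X i ω ≤ (i : ℝ) * β}).toReal)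
      (nhdsWithin 0 (Set.Ioi 0)) (nhds (Real.exp (-Real.exp (-y)))) := by
  have hset : ∀ β : ℝ, {ω | ∀ i : ℕ, uNorm β y ≤ (i:ℝ) → X i ω ≤ (i:ℝ) * β}
      = {ω | ∀ i : ℕ, ⌈uNorm β y⌉₊ ≤ i → X i ω ≤ (i:ℝ) * β} := by
    intro β
    ext ω
    simp only [Set.mem_setOf_eq]
    exact forall_congr' fun i => imp_congr_left (by rw [Nat.ceil_le])
  simp only [hset]
  have hε := tendsto_gQ_x0 y
  have hR := tendsto_gT_x0 y
  have hlo : Tendsto (fun β => Real.exp (-((1 + 2 * gQ ((⌈uNorm β y⌉₊ : ℝ) * β))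
      * (gQ ((⌈uNorm β y⌉₊ : ℝ) * β) + gT ((⌈uNorm β y⌉₊ : ℝ) * β) / β))))
      (𝓝[>] (0:ℝ)) (𝓝 (Real.exp (-Real.exp (-y)))) := by
    have harg := (((tendsto_const_nhds (x := (1:ℝ))).add (hε.const_mul 2)).mul
      (hε.add hR)).neg
    have h2 := (Real.continuous_exp.tendsto _).comp harg
    simpa [Function.comp_def] using h2
  have hup : Tendsto (fun β => Real.exp (-(gT ((⌈uNorm β y⌉₊ : ℝ) * β) / β)))
      (𝓝[>] (0:ℝ)) (𝓝 (Real.exp (-Real.exp (-y)))) :=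
    (Real.continuous_exp.tendsto _).comp hR.neg
  have hhalf : ∀ᶠ β in 𝓝[>] (0:ℝ), gQ ((⌈uNorm β y⌉₊ : ℝ) * β) ≤ 1/2 :=
    (hε.eventually_lt_const (by norm_num : (0:ℝ) < 1/2)).mono fun _ h => h.le
  refine tendsto_of_tendsto_of_tendsto_of_le_of_le' hlo hup ?_ ?_
  · filter_upwards [ev_x0 y, hhalf] with β h hh
    obtain ⟨hβ0, hv3, hvx, _⟩ := h
    exact (prob_bounds μ X hmeas hindep hlaw hβ0 _ (by linarith) hh).1
  · filter_upwards [ev_x0 y, hhalf] with β h hh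
    obtain ⟨hβ0, hv3, hvx, _⟩ := h
    exact (prob_bounds μ X hmeas hindep hlaw hβ0 _ (by linarith) hh).2
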